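/- Under Assumption A1 and the assembling property with Â bijective, the following hold: (i) if û ∈ Û solves Â û = f̂, then (R û, A R û − f) solves the subdomain flux formulation; (ii) if (u, t) ∈ range(R) × ker(R^⊤) solves the subdomain flux formulation, then there exists û ∈ Û solving Â û = f̂ with u = R û and t = A R û − f; (iii) the solution (u, t) of the subdomain flux formulation is unique; (iv) the map 𝒮 : U* → range(R) × ker(R^⊤), 𝒮 f := (R Â^{-1} R^⊤ f, A R Â^{-1} R^⊤ f − f), is a well-defined bounded linear solution operator for the subdomain flux formulation, i.e. A (𝒮f)₁ − (𝒮f)₂ = f for all f, and 𝒮(A u − t) = (u, t) for all (u, t) ∈ range(R) × ker(R^⊤). -/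

import Mathlib

/-- The transpose (dual map) `B^⊤ : Y* → X*` of a bounded linear operator `B : X → Y`. -/
noncomputable def trOp {X Y : Type*} [NormedAddCommGroup X] [NormedSpace ℂ X]
    [NormedAddCommGroup Y] [NormedSpace ℂ Y] (B : X →L[ℂ] Y) :
    (Y →L[ℂ] ℂ) →L[ℂ] (X →L[ℂ] ℂ) :=
  (ContinuousLinearMap.compL ℂ X Y ℂ).flip B

/-- properties of the subdomain flux formulation
`(u, t) ∈ range(R) × ker(R^⊤)`, `A u − t = f`. -/
theorem statement0
    {Uhat U : Type*}
    [NormedAddCommGroup Uhat] [InnerProductSpace ℂ Uhat] [CompleteSpace Uhat]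
    [NormedAddCommGroup U] [InnerProductSpace ℂ U] [CompleteSpace U]
    (R : Uhat →L[ℂ] U)
    -- Assumption A1
    (hRinj : LinearMap.ker (R : Uhat →ₗ[ℂ] U) = ⊥)
    (hRclosed : IsClosed (Set.range R))
    (A : U →L[ℂ] (U →L[ℂ] ℂ))
    (f : U →L[ℂ] ℂ)
    -- `Â = R^⊤ A R` is bijective with bounded inverse `Âinv`
    (Ahatinv : (Uhat →L[ℂ] ℂ) →L[ℂ] Uhat)
    (hAhat_left : ∀ uhat : Uhat, Ahatinv (trOp R (A (R uhat))) = uhat)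
    (hAhat_right : ∀ g : Uhat →L[ℂ] ℂ, trOp R (A (R (Ahatinv g))) = g) :
    -- (i)
    (∀ uhat : Uhat, trOp R (A (R uhat)) = trOp R f →
      R uhat ∈ Set.range R ∧ trOp R (A (R uhat) - f) = 0 ∧
        A (R uhat) - (A (R uhat) - f) = f) ∧
    -- (ii)
    (∀ (u : U) (t : U →L[ℂ] ℂ), u ∈ Set.range R → trOp R t = 0 → A u - t = f →
      ∃ uhat : Uhat, trOp R (A (R uhat)) = trOp R f ∧ u = R uhat ∧ t = A (R uhat) - f) ∧
    -- (iii) uniqueness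
    (∀ (u u' : U) (t t' : U →L[ℂ] ℂ),
      u ∈ Set.range R → trOp R t = 0 → A u - t = f →
      u' ∈ Set.range R → trOp R t' = 0 → A u' - t' = f → u = u' ∧ t = t') ∧
    -- (iv) the bounded linear solution operator `𝒮`
    (∃ S : (U →L[ℂ] ℂ) →L[ℂ] U × (U →L[ℂ] ℂ),
      (∀ g, S g = (R (Ahatinv (trOp R g)), A (R (Ahatinv (trOp R g))) - g)) ∧
      (∀ g, (S g).1 ∈ Set.range R ∧ trOp R (S g).2 = 0 ∧ A (S g).1 - (S g).2 = g) ∧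
      (∀ (u : U) (t : U →L[ℂ] ℂ), u ∈ Set.range R → trOp R t = 0 →
        S (A u - t) = (u, t))) := by
  have key : ∀ (u : U) (t : U →L[ℂ] ℂ), u ∈ Set.range R → trOp R t = 0 → A u - t = f →
      ∃ uhat : Uhat, trOp R (A (R uhat)) = trOp R f ∧ u = R uhat ∧ t = A (R uhat) - f := by
    intro u t hu ht hf
    obtain ⟨uhat, rfl⟩ := hu
    refine ⟨uhat, ?_, rfl, ?_⟩
    · have : A (R uhat) = t + f := by rw [← hf]; abel
      rw [this, map_add, ht, zero_add]
    · rw [← hf]; abel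
  refine ⟨?_, key, ?_, ?_⟩
  · intro uhat h
    exact ⟨⟨uhat, rfl⟩, by rw [map_sub, h, sub_self], by abel⟩
  · intro u u' t t' hu ht hf hu' ht' hf'
    obtain ⟨a, ha, rfl, rfl⟩ := key u t hu ht hf
    obtain ⟨b, hb, rfl, rfl⟩ := key u' t' hu' ht' hf'
    have : a = b := by
      have := (hAhat_left a).symm.trans (by rw [ha, ← hb, hAhat_left b])
      exact this
    subst this
    exact ⟨rfl, rfl⟩
  · set T : (U →L[ℂ] ℂ) →L[ℂ] U := R.comp (Ahatinv.comp (trOp R)) with hT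
    refine ⟨T.prod ((A.comp T) - ContinuousLinearMap.id ℂ _), fun g => by simp [hT, ContinuousLinearMap.prod_apply], ?_, ?_⟩
    · intro g
      refine ⟨⟨Ahatinv (trOp R g), rfl⟩, ?_, by show A (T g) - (A (T g) - g) = g; abel⟩
      show trOp R (A (T g) - g) = 0
      rw [map_sub]
      show trOp R (A (R (Ahatinv (trOp R g)))) - trOp R g = 0
      rw [hAhat_right, sub_self]
    · intro u t hu ht
      obtain ⟨uhat, rfl⟩ := hu
      have h1 : trOp R (A (R uhat) - t) = trOp R (A (R uhat)) := by
        rw [map_sub, ht, sub_zero]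
      have hTg : T (A (R uhat) - t) = R uhat := by
        show R (Ahatinv (trOp R (A (R uhat) - t))) = R uhat
        rw [h1, hAhat_left]
      refine Prod.ext ?_ ?_
      · exact hTg
      · show A (T (A (R uhat) - t)) - (A (R uhat) - t) = t
        rw [hTg]; abel
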